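/- Let L ≥ 1 and let P = [p_{i,j}] and P' = [p'_{i,j}] (i,j ∈ {0,1,…,L}) be upper triangular column-stochastic real matrices with p_{0,0} = p'_{0,0} = 1 satisfying: (i) p'_{j,j} ≥ p_{j,j} for every j ∈ {1,…,L}; (ii) Σ_{l=0}^{i−1} (p_{l,j} − p'_{l,j}) ≥ 0 for all 1 ≤ i < j ≤ L; (iii) Σ_{l=0}^{i} (p'_{l,j−1} − p'_{l,j}) ≥ 0 for all 0 ≤ i < j−1 with j ≤ L; and additionally the diagonal entries λ'_j := p'_{j,j} (j = 1,…,L) are pairwise distinct. Let R = [p_{i,j}]_{i,j=1,…,L} and R' = [p'_{i,j}]_{i,j=1,…,L}, and let p'_{i,j,k} denote the power factors of R'. Let e = (e_1,…,e_L)ᵀ satisfy 0 ≤ e_1 ≤ e_2 ≤ … ≤ e_L and let p⁰ ∈ ℝᴸ be entrywise nonnegative. Then for every t ≥ 1, eᵀ Rᵗ p⁰ ≤ Σ_{k=1}^{L} Σ_{i=1}^{k} Σ_{j=k}^{L} e_i · p'_{i,j,k} · p⁰_j · (λ'_k)^{t−1}. -/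

import Mathlib

open Matrix

/-- The power factors `p_{i,j,k}` of an (`0`-based, `ℕ`-indexed) upper triangular
matrix `a` with pairwise distinct diagonal entries. -/
noncomputable def powerFactor (a : ℕ → ℕ → ℝ) : ℕ → ℕ → ℕ → ℝ
  | i, j, k =>
    if i = j ∧ j = k then a j j
    else if hc : k < i ∨ j < k then 0
    else if hd : k < j then
      (∑ l ∈ (Finset.Ico k j).attach, powerFactor a i l.1 k * a l.1 j) / (a k k - a j j)
    else a i j - ∑ l ∈ (Finset.Ico i j).attach, powerFactor a i j l.1
  termination_by i j k => j + k
  decreasing_by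
  · have := l.2; simp only [Finset.mem_Ico] at this; omega
  · have := l.2; simp only [Finset.mem_Ico] at this; omega


section Aux
open Finset

variable (a : ℕ → ℕ → ℝ)


lemma pf_diag (j : ℕ) : powerFactor a j j j = a j j := by
  rw [powerFactor]; simp

lemma pf_zero {i j k : ℕ} (h : k < i ∨ j < k) : powerFactor a i j k = 0 := by
  rw [powerFactor]
  have : ¬ (i = j ∧ j = k) := by omega
  rw [if_neg this, dif_pos h]

lemma pf_mid {i j k : ℕ} (h1 : i ≤ k) (h2 : k < j) :
    powerFactor a i j k
      = (∑ l ∈ Finset.Ico k j, powerFactor a i l k * a l j) / (a k k - a j j) := by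
  rw [powerFactor]
  have hn : ¬ (i = j ∧ j = k) := by omega
  have hc : ¬ (k < i ∨ j < k) := by omega
  rw [if_neg hn, dif_neg hc, dif_pos h2,
    Finset.sum_attach (Finset.Ico k j) (fun l => powerFactor a i l k * a l j)]

lemma pf_top {i j : ℕ} (h : i < j) :
    powerFactor a i j j = a i j - ∑ l ∈ Finset.Ico i j, powerFactor a i j l := by
  rw [powerFactor]
  have hn : ¬ (i = j ∧ j = j) := by omega
  have hc : ¬ (j < i ∨ j < j) := by omega
  rw [if_neg hn, dif_neg hc, dif_neg (lt_irrefl j),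
    Finset.sum_attach (Finset.Ico i j) (fun l => powerFactor a i j l)]

lemma pf_sum {i j : ℕ} (hij : i ≤ j) :
    ∑ k ∈ Finset.Icc i j, powerFactor a i j k = a i j := by
  rcases eq_or_lt_of_le hij with rfl | h
  · simp [pf_diag]
  · rw [← Finset.Ico_add_one_right_eq_Icc, Finset.sum_Ico_succ_top hij, pf_top a h]; ring

lemma pf_key {L : ℕ} (hne : ∀ k j : ℕ, k < j → j < L → a k k ≠ a j j)
    {i k j : ℕ} (hik : i ≤ k) (hkj : k ≤ j) (hjL : j < L) :
    ∑ l ∈ Finset.Icc k j, powerFactor a i l k * a l j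
      = powerFactor a i j k * a k k := by
  rcases eq_or_lt_of_le hkj with rfl | hlt
  · simp
  · have hne' : a k k - a j j ≠ 0 := sub_ne_zero.mpr (hne k j hlt hjL)
    have hd : ∑ l ∈ Finset.Ico k j, powerFactor a i l k * a l j
        = powerFactor a i j k * (a k k - a j j) := by
      rw [pf_mid a hik hlt]; field_simp
    rw [← Finset.Ico_add_one_right_eq_Icc, Finset.sum_Ico_succ_top hkj, hd]; ring


lemma sum_Icc_fin {L : ℕ} (a b : Fin L) (g : ℕ → ℝ) :
    ∑ k ∈ Finset.Icc a b, g (k : ℕ) = ∑ k ∈ Finset.Icc (a : ℕ) (b : ℕ), g k := by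
  rw [← Fin.map_valEmbedding_Icc, Finset.sum_map]; rfl

lemma sum_swap_tri {L : ℕ} (i j : Fin L) (F : Fin L → Fin L → ℝ) :
    ∑ l ∈ Finset.Icc i j, ∑ k ∈ Finset.Icc i l, F k l
      = ∑ k ∈ Finset.Icc i j, ∑ l ∈ Finset.Icc k j, F k l := by
  rw [Finset.sum_sigma', Finset.sum_sigma']
  apply Finset.sum_nbij' (fun x => ⟨x.2, x.1⟩) (fun x => ⟨x.2, x.1⟩) <;>
    simp only [Finset.mem_sigma, Finset.mem_Icc] <;> intros <;>
      first
        | rfl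
        | (constructor <;> omega)

lemma tri_pow {L : ℕ} (M : Matrix (Fin L) (Fin L) ℝ)
    (htri : ∀ i j : Fin L, j < i → M i j = 0) :
    ∀ t : ℕ, ∀ i j : Fin L, j < i → (M ^ t) i j = 0 := by
  intro t
  induction t with
  | zero => intro i j h; rw [pow_zero, Matrix.one_apply_ne (by omega : i ≠ j)]
  | succ t ih =>
    intro i j h
    rw [pow_succ, Matrix.mul_apply]
    apply Finset.sum_eq_zero
    intro l _
    rcases lt_or_ge l i with hl | hl
    · rw [ih i l hl, zero_mul]
    · rw [htri l j (lt_of_lt_of_le h hl), mul_zero]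

lemma pow_formula {L : ℕ} (R' : Matrix (Fin L) (Fin L) ℝ) (A' : ℕ → ℕ → ℝ)
    (hA' : ∀ i j : Fin L, A' (i : ℕ) (j : ℕ) = R' i j)
    (htri : ∀ i j : Fin L, j < i → R' i j = 0)
    (hne : ∀ k j : ℕ, k < j → j < L → A' k k ≠ A' j j) :
    ∀ t : ℕ, 1 ≤ t → ∀ i j : Fin L, i ≤ j →
      (R' ^ t) i j
        = ∑ k ∈ Finset.Icc i j,
            powerFactor A' (i : ℕ) (j : ℕ) (k : ℕ) * (A' (k : ℕ) (k : ℕ)) ^ (t - 1) := by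
  intro t ht
  induction t, ht using Nat.le_induction with
  | base =>
    intro i j hij
    rw [pow_one]
    simp only [Nat.sub_self, pow_zero, mul_one]
    rw [sum_Icc_fin i j (fun k => powerFactor A' (i : ℕ) (j : ℕ) k),
      pf_sum A' (by exact_mod_cast hij), hA']
  | succ t ht ih =>
    intro i j hij
    rw [pow_succ, Matrix.mul_apply]
    have hstep : ∀ l : Fin L,
        (R' ^ t) i l * R' l j
          = if l ∈ Finset.Icc i j then (R' ^ t) i l * R' l j else 0 := by
      intro l
      split_ifs with h
      · rfl
      · simp only [Finset.mem_Icc, not_and_or, not_le] at h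
        rcases h with h | h
        · rw [tri_pow R' htri t i l h, zero_mul]
        · rw [htri l j h, mul_zero]
    calc ∑ l, (R' ^ t) i l * R' l j
        = ∑ l ∈ Finset.Icc i j, (R' ^ t) i l * R' l j := by
          rw [Finset.sum_congr rfl (fun l _ => hstep l), Finset.sum_ite_mem,
            Finset.univ_inter]
      _ = ∑ l ∈ Finset.Icc i j, ∑ k ∈ Finset.Icc i l,
            (powerFactor A' (i:ℕ) (l:ℕ) (k:ℕ) * (A' (k:ℕ) (k:ℕ)) ^ (t-1)) * R' l j := by
          refine Finset.sum_congr rfl fun l hl => ?_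
          rw [Finset.mem_Icc] at hl
          rw [ih i l hl.1, Finset.sum_mul]
      _ = ∑ k ∈ Finset.Icc i j, ∑ l ∈ Finset.Icc k j,
            (powerFactor A' (i:ℕ) (l:ℕ) (k:ℕ) * (A' (k:ℕ) (k:ℕ)) ^ (t-1)) * R' l j := by
          exact sum_swap_tri i j _
      _ = ∑ k ∈ Finset.Icc i j,
            powerFactor A' (i:ℕ) (j:ℕ) (k:ℕ) * (A' (k:ℕ) (k:ℕ)) ^ (t + 1 - 1) := by
          refine Finset.sum_congr rfl fun k hk => ?_
          rw [Finset.mem_Icc] at hk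
          have : ∑ l ∈ Finset.Icc k j,
              (powerFactor A' (i:ℕ) (l:ℕ) (k:ℕ) * (A' (k:ℕ) (k:ℕ)) ^ (t-1)) * R' l j
              = (∑ l ∈ Finset.Icc k j, powerFactor A' (i:ℕ) (l:ℕ) (k:ℕ) * A' (l:ℕ) (j:ℕ))
                  * (A' (k:ℕ) (k:ℕ)) ^ (t-1) := by
            rw [Finset.sum_mul]
            refine Finset.sum_congr rfl fun l _ => ?_
            rw [hA' l j]; ring
          rw [this, sum_Icc_fin k j (fun l => powerFactor A' (i:ℕ) l (k:ℕ) * A' l (j:ℕ)),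
            pf_key A' hne (by exact_mod_cast hk.1) (by exact_mod_cast hk.2) j.isLt]
          have hpow : (A' (k:ℕ) (k:ℕ)) ^ (t + 1 - 1) = A' (k:ℕ) (k:ℕ) * (A' (k:ℕ) (k:ℕ)) ^ (t-1) := by
            rw [← pow_succ']
            congr 1
            omega
          rw [hpow]; ring


lemma abel_nonpos (n : ℕ) (v d : ℕ → ℝ)
    (hmono : ∀ i, i < n → v i ≤ v (i + 1))
    (hS : ∀ i, 1 ≤ i → i ≤ n → 0 ≤ ∑ l ∈ Finset.range i, d l)
    (htot : ∑ l ∈ Finset.range (n + 1), d l = 0) :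
    ∑ i ∈ Finset.range (n + 1), v i * d i ≤ 0 := by
  have h := Finset.sum_range_by_parts v d (n + 1)
  simp only [smul_eq_mul, Nat.add_sub_cancel] at h
  rw [h, htot, mul_zero, zero_sub, neg_nonpos]
  apply Finset.sum_nonneg
  intro i hi
  rw [Finset.mem_range] at hi
  exact mul_nonneg (by linarith [hmono i hi]) (hS (i + 1) (by omega) (by omega))

lemma fin_abel_nonpos {L : ℕ} (v D : Fin (L + 1) → ℝ)
    (hmono : ∀ i j : Fin (L + 1), i ≤ j → v i ≤ v j)
    (hS : ∀ i : Fin (L + 1), 0 < (i : ℕ) →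
      0 ≤ ∑ l ∈ Finset.univ.filter (fun l => l < i), D l)
    (htot : ∑ l, D l = 0) :
    ∑ i, v i * D i ≤ 0 := by
  set W : ℕ → ℝ := fun l => if h : l < L + 1 then v ⟨l, h⟩ else 0 with hW
  set d : ℕ → ℝ := fun l => if h : l < L + 1 then D ⟨l, h⟩ else 0 with hd
  have hcoe : ∀ l : Fin (L + 1), W (l : ℕ) = v l ∧ d (l : ℕ) = D l := by
    intro l
    constructor <;> simp only [hW, hd, dif_pos l.isLt, Fin.eta]
  have hrange : ∀ (i : ℕ) (h1 : 1 ≤ i) (h2 : i ≤ L),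
      ∑ l ∈ Finset.range i, d l
        = ∑ l ∈ Finset.univ.filter (fun l => l < (⟨i, by omega⟩ : Fin (L + 1))), D l := by
    intro i h1 h2
    have e1 : (Finset.range (L + 1)).filter (fun l => l < i) = Finset.range i := by
      ext x; simp only [Finset.mem_filter, Finset.mem_range]; omega
    rw [← e1, Finset.sum_filter,
      ← Fin.sum_univ_eq_sum_range (fun l => if l < i then d l else 0) (L + 1),
      Finset.sum_filter]
    refine Finset.sum_congr rfl fun l _ => ?_
    simp [Fin.lt_def, (hcoe l).2]
  have h1 : ∑ i, v i * D i = ∑ i ∈ Finset.range (L + 1), W i * d i := by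
    rw [← Fin.sum_univ_eq_sum_range (fun i => W i * d i) (L + 1)]
    exact Finset.sum_congr rfl fun i _ => by rw [(hcoe i).1, (hcoe i).2]
  rw [h1]
  apply abel_nonpos L W d
  · intro i hi
    have e1 : W i = v ⟨i, by omega⟩ := by simp only [hW, dif_pos (show i < L + 1 by omega)]
    have e2 : W (i + 1) = v ⟨i + 1, by omega⟩ := by simp only [hW, dif_pos (show i + 1 < L + 1 by omega)]
    rw [e1, e2]
    exact hmono _ _ (by simp [Fin.le_def])
  · intro i hi1 hi2
    rw [hrange i hi1 hi2]
    exact hS ⟨i, by omega⟩ (by show 0 < i; omega)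
  · rw [← Fin.sum_univ_eq_sum_range d (L + 1), ← htot]
    exact Finset.sum_congr rfl fun l _ => (hcoe l).2

lemma claimA {L : ℕ} (P P' : Matrix (Fin (L + 1)) (Fin (L + 1)) ℝ)
    (hPcol : ∀ j, ∑ i, P i j = 1) (hP'col : ∀ j, ∑ i, P' i j = 1)
    (hPtri : ∀ i j, j < i → P i j = 0) (hP'tri : ∀ i j, j < i → P' i j = 0)
    (hcond1 : ∀ j : Fin L, P j.succ j.succ ≤ P' j.succ j.succ)
    (hcond2 : ∀ i j : Fin (L + 1), 0 < (i : ℕ) → i < j →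
      0 ≤ ∑ l ∈ Finset.univ.filter (fun l : Fin (L + 1) => l < i), (P l j - P' l j))
    (v : Fin (L + 1) → ℝ) (hvmono : ∀ i j : Fin (L + 1), i ≤ j → v i ≤ v j)
    (j : Fin (L + 1)) :
    ∑ i, v i * P i j ≤ ∑ i, v i * P' i j := by
  have key : ∑ i, v i * (P i j - P' i j) ≤ 0 := by
    apply fin_abel_nonpos v _ hvmono
    · intro i hi
      rcases lt_trichotomy i j with hij | rfl | hij
      · exact hcond2 i j hi hij
      · have split := Finset.sum_filter_add_sum_filter_not Finset.univ
          (fun l => l < i) (fun l => P l i - P' l i)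
        have htotal : ∑ l, (P l i - P' l i) = 0 := by
          rw [Finset.sum_sub_distrib, hPcol, hP'col, sub_self]
        have htail : ∑ l ∈ Finset.univ.filter (fun l => ¬ l < i), (P l i - P' l i)
            = P i i - P' i i := by
          apply Finset.sum_eq_single_of_mem
          · simp
          · intro l hl hne
            simp only [Finset.mem_filter, not_lt] at hl
            have : i < l := lt_of_le_of_ne hl.2 (Ne.symm hne)
            rw [hPtri l i this, hP'tri l i this, sub_self]
        have hdiag : P i i ≤ P' i i := by
          have hlt : (i : ℕ) - 1 < L := by omega
          have : (⟨(i : ℕ) - 1, hlt⟩ : Fin L).succ = i := by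
            apply Fin.ext; simp; omega
          rw [← this]
          exact hcond1 _
        rw [htotal] at split
        linarith
      · have split := Finset.sum_filter_add_sum_filter_not Finset.univ
          (fun l => l < i) (fun l => P l j - P' l j)
        have htotal : ∑ l, (P l j - P' l j) = 0 := by
          rw [Finset.sum_sub_distrib, hPcol, hP'col, sub_self]
        have htail : ∑ l ∈ Finset.univ.filter (fun l => ¬ l < i), (P l j - P' l j)
            = 0 := by
          apply Finset.sum_eq_zero
          intro l hl
          simp only [Finset.mem_filter, not_lt] at hl
          have : j < l := lt_of_lt_of_le hij hl.2
          rw [hPtri l j this, hP'tri l j this, sub_self]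
        rw [htotal] at split
        linarith
    · rw [Finset.sum_sub_distrib, hPcol, hP'col, sub_self]
  have expand : ∑ i, v i * (P i j - P' i j)
      = ∑ i, v i * P i j - ∑ i, v i * P' i j := by
    rw [← Finset.sum_sub_distrib]
    exact Finset.sum_congr rfl fun i _ => by ring
  linarith [key, expand.symm.le]

lemma claimB {L : ℕ} (P' : Matrix (Fin (L + 1)) (Fin (L + 1)) ℝ)
    (hP'nn : ∀ i j, 0 ≤ P' i j)
    (hP'col : ∀ j, ∑ i, P' i j = 1)
    (hP'tri : ∀ i j, j < i → P' i j = 0)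
    (hcond3 : ∀ (i : Fin (L + 1)) (j : Fin L), (i : ℕ) < (j : ℕ) →
      0 ≤ ∑ l ∈ Finset.univ.filter (fun l : Fin (L + 1) => l ≤ i),
        (P' l j.castSucc - P' l j.succ))
    (v : Fin (L + 1) → ℝ) (hv0 : v 0 = 0)
    (hvmono : ∀ i j : Fin (L + 1), i ≤ j → v i ≤ v j) :
    (∑ i, v i * P' i 0 = 0) ∧
      ∀ a b : Fin (L + 1), a ≤ b → ∑ i, v i * P' i a ≤ ∑ i, v i * P' i b := by
  constructor
  · have : ∑ i, v i * P' i 0 = v 0 * P' 0 0 := by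
      apply Finset.sum_eq_single_of_mem
      · simp
      · intro l _ hne
        rw [hP'tri l 0 (Fin.pos_of_ne_zero hne), mul_zero]
    rw [this, hv0, zero_mul]
  · -- consecutive step
    have hstep : ∀ c : Fin L,
        ∑ i, v i * P' i c.castSucc ≤ ∑ i, v i * P' i c.succ := by
      intro c
      have key : ∑ i, v i * (P' i c.castSucc - P' i c.succ) ≤ 0 := by
        apply fin_abel_nonpos v _ hvmono
        · intro i hi
          rcases lt_trichotomy (i : ℕ) ((c : ℕ) + 1) with hic | hic | hic
          · -- i ≤ c : use hcond3 with index i - 1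
            have hlt : (i : ℕ) - 1 < L + 1 := by omega
            have hfe : Finset.univ.filter (fun l : Fin (L + 1) => l < i)
                = Finset.univ.filter
                    (fun l : Fin (L + 1) => l ≤ (⟨(i : ℕ) - 1, hlt⟩ : Fin (L + 1))) := by
              ext x
              simp only [Finset.mem_filter, Finset.mem_univ, true_and, Fin.lt_def, Fin.le_def, Fin.val_mk]
              omega
            rw [hfe]
            exact hcond3 ⟨(i : ℕ) - 1, hlt⟩ c (by simp; omega)
          · -- i = c + 1
            have split := Finset.sum_filter_add_sum_filter_not Finset.univ
              (fun l => l < i) (fun l => P' l c.castSucc - P' l c.succ)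
            have htotal : ∑ l, (P' l c.castSucc - P' l c.succ) = 0 := by
              rw [Finset.sum_sub_distrib, hP'col, hP'col, sub_self]
            have hieq : i = c.succ := by apply Fin.ext; simp [hic]
            have htail : ∑ l ∈ Finset.univ.filter (fun l => ¬ l < i),
                (P' l c.castSucc - P' l c.succ) = - P' c.succ c.succ := by
              rw [show (- P' c.succ c.succ : ℝ)
                  = P' c.succ c.castSucc - P' c.succ c.succ by
                rw [hP'tri c.succ c.castSucc (by rw [Fin.lt_def]; simp), zero_sub]]
              apply Finset.sum_eq_single_of_mem
              · simp [hieq]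
              · intro l hl hne
                simp only [Finset.mem_filter, not_lt] at hl
                have hlge : c.succ < l :=
                  lt_of_le_of_ne (by rw [← hieq]; exact hl.2) (Ne.symm hne)
                have h1 : c.castSucc < l := lt_trans (by rw [Fin.lt_def]; simp) hlge
                rw [hP'tri l c.castSucc h1, hP'tri l c.succ hlge, sub_self]
            rw [htotal] at split
            have := hP'nn c.succ c.succ
            linarith
          · -- i > c + 1 : tail vanishes
            have split := Finset.sum_filter_add_sum_filter_not Finset.univ
              (fun l => l < i) (fun l => P' l c.castSucc - P' l c.succ)
            have htotal : ∑ l, (P' l c.castSucc - P' l c.succ) = 0 := by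
              rw [Finset.sum_sub_distrib, hP'col, hP'col, sub_self]
            have htail : ∑ l ∈ Finset.univ.filter (fun l => ¬ l < i),
                (P' l c.castSucc - P' l c.succ) = 0 := by
              apply Finset.sum_eq_zero
              intro l hl
              simp only [Finset.mem_filter, not_lt] at hl
              have h1 : c.castSucc < l := by
                rw [Fin.lt_def] at *
                have := hl.2
                rw [Fin.le_def] at this
                simp only [Fin.coe_castSucc]
                omega
              have h2 : c.succ < l := by
                rw [Fin.lt_def] at *
                have := hl.2
                rw [Fin.le_def] at this
                simp only [Fin.val_succ]
                omega
              rw [hP'tri l c.castSucc h1, hP'tri l c.succ h2, sub_self]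
            rw [htotal] at split
            linarith
        · rw [Finset.sum_sub_distrib, hP'col, hP'col, sub_self]
      have expand : ∑ i, v i * (P' i c.castSucc - P' i c.succ)
          = ∑ i, v i * P' i c.castSucc - ∑ i, v i * P' i c.succ := by
        rw [← Finset.sum_sub_distrib]
        exact Finset.sum_congr rfl fun i _ => by ring
      linarith [key, expand.symm.le]
    -- chain consecutive steps
    have hchain : ∀ (k : ℕ) (hk : k < L + 1) (a : Fin (L + 1)), (a : ℕ) ≤ k →
        ∑ i, v i * P' i a ≤ ∑ i, v i * P' i ⟨k, hk⟩ := by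
      intro k
      induction k with
      | zero =>
        intro hk a ha
        have : a = ⟨0, hk⟩ := by apply Fin.ext; simpa using ha
        rw [this]
      | succ k ih =>
        intro hk a ha
        rcases Nat.lt_or_ge (a : ℕ) (k + 1) with h | h
        · have hkL : k < L := by omega
          have e1 : (⟨k, hkL⟩ : Fin L).castSucc = ⟨k, by omega⟩ := rfl
          have e2 : (⟨k, hkL⟩ : Fin L).succ = ⟨k + 1, hk⟩ := rfl
          have := hstep ⟨k, hkL⟩
          rw [e1, e2] at this
          exact le_trans (ih (by omega) a (by omega)) this
        · have : a = ⟨k + 1, hk⟩ := by apply Fin.ext; simp; omega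
          rw [this]
    intro a b hab
    have := hchain (b : ℕ) b.isLt a (by rwa [← Fin.le_def])
    simpa using this


lemma col0 {L : ℕ} (M : Matrix (Fin (L + 1)) (Fin (L + 1)) ℝ)
    (h00 : M 0 0 = 1) (htri : ∀ i j, j < i → M i j = 0) :
    ∀ t : ℕ, ∀ i, (M ^ t) i 0 = if i = 0 then 1 else 0 := by
  intro t
  induction t with
  | zero => intro i; rw [pow_zero]; exact Matrix.one_apply
  | succ t ih =>
    intro i
    rw [pow_succ, Matrix.mul_apply]
    have : ∀ l : Fin (L + 1), l ∈ Finset.univ → l ≠ 0 → (M ^ t) i l * M l 0 = 0 := by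
      intro l _ hl
      rw [htri l 0 (Fin.pos_of_ne_zero hl), mul_zero]
    rw [Finset.sum_eq_single_of_mem 0 (Finset.mem_univ 0) this, ih i, h00, mul_one]

lemma vecMul_zero' {L : ℕ} (M : Matrix (Fin (L + 1)) (Fin (L + 1)) ℝ)
    (h00 : M 0 0 = 1) (htri : ∀ i j, j < i → M i j = 0)
    (e : Fin (L + 1) → ℝ) (he0 : e 0 = 0) (t : ℕ) :
    (e ᵥ* M ^ t) 0 = 0 := by
  simp only [Matrix.vecMul, dotProduct]
  have : ∀ i : Fin (L + 1), e i * (M ^ t) i 0 = if i = 0 then e i else 0 := by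
    intro i
    rw [col0 M h00 htri t i]
    split_ifs <;> simp
  rw [Finset.sum_congr rfl fun i _ => this i, Finset.sum_ite_eq' Finset.univ 0 e]
  simpa using he0

lemma bridge {L : ℕ} (P : Matrix (Fin (L + 1)) (Fin (L + 1)) ℝ)
    (R : Matrix (Fin L) (Fin L) ℝ)
    (hR : ∀ i j : Fin L, R i j = P i.succ j.succ)
    (h00 : P 0 0 = 1) (htri : ∀ i j, j < i → P i j = 0)
    (e : Fin (L + 1) → ℝ) (he0 : e 0 = 0) :
    ∀ t : ℕ, ∀ j : Fin L,
      ((fun i : Fin L => e i.succ) ᵥ* R ^ t) j = (e ᵥ* P ^ t) j.succ := by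
  intro t
  induction t with
  | zero => intro j; rw [pow_zero, pow_zero, Matrix.vecMul_one, Matrix.vecMul_one]
  | succ t ih =>
    intro j
    rw [pow_succ, pow_succ, ← Matrix.vecMul_vecMul, ← Matrix.vecMul_vecMul]
    show ∑ i, ((fun i : Fin L => e i.succ) ᵥ* R ^ t) i * R i j
      = ∑ i, (e ᵥ* P ^ t) i * P i j.succ
    rw [Fin.sum_univ_succ (fun i => (e ᵥ* P ^ t) i * P i j.succ)]
    rw [vecMul_zero' P h00 htri e he0 t, zero_mul, zero_add]
    exact Finset.sum_congr rfl fun i _ => by rw [ih i, hR i j]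

lemma triple_reorder {L : ℕ} (F : Fin L → Fin L → Fin L → ℝ) :
    ∑ i, ∑ j ∈ Finset.Ici i, ∑ k ∈ Finset.Icc i j, F i j k
      = ∑ k, ∑ i ∈ Finset.Iic k, ∑ j ∈ Finset.Ici k, F i j k := by
  have hIci : ∀ (c : Fin L) (g : Fin L → ℝ),
      ∑ j ∈ Finset.Ici c, g j = ∑ j, if c ≤ j then g j else 0 := by
    intro c g
    rw [← Finset.sum_filter]
    apply Finset.sum_congr _ (fun _ _ => rfl)
    ext x; simp
  have hIic : ∀ (c : Fin L) (g : Fin L → ℝ),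
      ∑ j ∈ Finset.Iic c, g j = ∑ j, if j ≤ c then g j else 0 := by
    intro c g
    rw [← Finset.sum_filter]
    apply Finset.sum_congr _ (fun _ _ => rfl)
    ext x; simp
  have hIcc : ∀ (a b : Fin L) (g : Fin L → ℝ),
      ∑ j ∈ Finset.Icc a b, g j = ∑ j, if a ≤ j ∧ j ≤ b then g j else 0 := by
    intro a b g
    rw [← Finset.sum_filter]
    apply Finset.sum_congr _ (fun _ _ => rfl)
    ext x; simp [Finset.mem_Icc]
  calc ∑ i, ∑ j ∈ Finset.Ici i, ∑ k ∈ Finset.Icc i j, F i j k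
      = ∑ i, ∑ j, ∑ k, (if i ≤ k ∧ k ≤ j then F i j k else 0) := by
        refine Finset.sum_congr rfl fun i _ => ?_
        rw [hIci i]
        refine Finset.sum_congr rfl fun j _ => ?_
        rw [hIcc i j]
        split_ifs with h
        · rfl
        · symm
          apply Finset.sum_eq_zero
          intro k _
          exact if_neg (fun hc => h (le_trans hc.1 hc.2))
    _ = ∑ i, ∑ k, ∑ j, (if i ≤ k ∧ k ≤ j then F i j k else 0) :=
        Finset.sum_congr rfl fun i _ => Finset.sum_comm
    _ = ∑ k, ∑ i, ∑ j, (if i ≤ k ∧ k ≤ j then F i j k else 0) :=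
        Finset.sum_comm
    _ = ∑ k, ∑ i ∈ Finset.Iic k, ∑ j ∈ Finset.Ici k, F i j k := by
        refine Finset.sum_congr rfl fun k _ => ?_
        rw [hIic k]
        refine Finset.sum_congr rfl fun i _ => ?_
        rw [hIci k]
        split_ifs with h
        · exact Finset.sum_congr rfl fun j _ =>
            if_congr (and_iff_right h) rfl rfl
        · have hz : (∑ j, if i ≤ k ∧ k ≤ j then F i j k else 0) = 0 :=
            Finset.sum_eq_zero fun j _ => if_neg (fun hc => h hc.1)
          exact hz

end Aux

/-- upper bound on the error via the power factors of a slower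
auxiliary upper triangular transition matrix `P'`. -/
theorem stmt_14 (L : ℕ) (hL : 1 ≤ L)
    (P P' : Matrix (Fin (L + 1)) (Fin (L + 1)) ℝ)
    (hPnn : ∀ i j, 0 ≤ P i j) (hP'nn : ∀ i j, 0 ≤ P' i j)
    (hPcol : ∀ j, ∑ i, P i j = 1) (hP'col : ∀ j, ∑ i, P' i j = 1)
    (hPtri : ∀ i j, j < i → P i j = 0) (hP'tri : ∀ i j, j < i → P' i j = 0)
    (hP00 : P 0 0 = 1) (hP'00 : P' 0 0 = 1)
    (hcond1 : ∀ j : Fin L, P j.succ j.succ ≤ P' j.succ j.succ)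
    (hcond2 : ∀ i j : Fin (L + 1), 0 < (i : ℕ) → i < j →
      0 ≤ ∑ l ∈ Finset.univ.filter (fun l : Fin (L + 1) => l < i), (P l j - P' l j))
    (hcond3 : ∀ (i : Fin (L + 1)) (j : Fin L), (i : ℕ) < (j : ℕ) →
      0 ≤ ∑ l ∈ Finset.univ.filter (fun l : Fin (L + 1) => l ≤ i),
        (P' l j.castSucc - P' l j.succ))
    (hdistinct : ∀ i j : Fin L, i ≠ j → P' i.succ i.succ ≠ P' j.succ j.succ)
    (R R' : Matrix (Fin L) (Fin L) ℝ)
    (hR : ∀ i j : Fin L, R i j = P i.succ j.succ)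
    (hR' : ∀ i j : Fin L, R' i j = P' i.succ j.succ)
    (A' : ℕ → ℕ → ℝ) (hA' : ∀ i j : Fin L, A' (i : ℕ) (j : ℕ) = R' i j)
    (e : Fin (L + 1) → ℝ) (he0 : e 0 = 0)
    (henn : ∀ i : Fin L, 0 ≤ e i.succ)
    (hemono : ∀ i j : Fin L, i ≤ j → e i.succ ≤ e j.succ)
    (p0 : Fin L → ℝ) (hp0 : ∀ i, 0 ≤ p0 i) :
    ∀ t : ℕ, 1 ≤ t →
      (fun i : Fin L => e i.succ) ⬝ᵥ ((R ^ t) *ᵥ p0)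
        ≤ ∑ k : Fin L, ∑ i ∈ Finset.Iic k, ∑ j ∈ Finset.Ici k,
            e i.succ * powerFactor A' (i : ℕ) (j : ℕ) (k : ℕ) * p0 j
              * (R' k k) ^ (t - 1) := by
  intro t ht
  have hemonoF : ∀ i j : Fin (L + 1), i ≤ j → e i ≤ e j := by
    intro i j hij
    rcases Fin.eq_zero_or_eq_succ i with rfl | ⟨i0, rfl⟩
    · rcases Fin.eq_zero_or_eq_succ j with rfl | ⟨j0, rfl⟩
      · exact le_rfl
      · rw [he0]; exact henn j0
    · rcases Fin.eq_zero_or_eq_succ j with rfl | ⟨j0, rfl⟩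
      · exact absurd (Fin.le_zero_iff.mp hij) (Fin.succ_ne_zero i0)
      · exact hemono i0 j0 (Fin.succ_le_succ_iff.mp hij)
  have comp : ∀ s : ℕ, (∀ j, (e ᵥ* P ^ s) j ≤ (e ᵥ* P' ^ s) j)
      ∧ (∀ a b : Fin (L + 1), a ≤ b → (e ᵥ* P' ^ s) a ≤ (e ᵥ* P' ^ s) b)
      ∧ (e ᵥ* P' ^ s) 0 = 0 := by
    intro s
    induction s with
    | zero =>
      simp only [pow_zero, Matrix.vecMul_one]
      exact ⟨fun j => le_rfl, hemonoF, he0⟩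
    | succ s ih =>
      obtain ⟨ihle, ihmono, ih0⟩ := ih
      have hv := claimB P' hP'nn hP'col hP'tri hcond3 (e ᵥ* P' ^ s) ih0 ihmono
      refine ⟨?_, ?_, ?_⟩
      · intro j
        rw [pow_succ, pow_succ, ← Matrix.vecMul_vecMul, ← Matrix.vecMul_vecMul]
        show ∑ i, (e ᵥ* P ^ s) i * P i j ≤ ∑ i, (e ᵥ* P' ^ s) i * P' i j
        calc ∑ i, (e ᵥ* P ^ s) i * P i j
            ≤ ∑ i, (e ᵥ* P' ^ s) i * P i j :=
              Finset.sum_le_sum fun i _ =>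
                mul_le_mul_of_nonneg_right (ihle i) (hPnn i j)
          _ ≤ ∑ i, (e ᵥ* P' ^ s) i * P' i j :=
              claimA P P' hPcol hP'col hPtri hP'tri hcond1 hcond2 _ ihmono j
      · intro a b hab
        rw [pow_succ, ← Matrix.vecMul_vecMul]
        exact hv.2 a b hab
      · rw [pow_succ, ← Matrix.vecMul_vecMul]
        exact hv.1
  have hb := bridge P R hR hP00 hPtri e he0
  have hb' := bridge P' R' hR' hP'00 hP'tri e he0
  rw [Matrix.dotProduct_mulVec]
  have step1 : ((fun i : Fin L => e i.succ) ᵥ* R ^ t) ⬝ᵥ p0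
      ≤ ((fun i : Fin L => e i.succ) ᵥ* R' ^ t) ⬝ᵥ p0 := by
    apply Finset.sum_le_sum
    intro j _
    apply mul_le_mul_of_nonneg_right _ (hp0 j)
    rw [hb t j, hb' t j]
    exact (comp t).1 j.succ
  refine le_trans step1 (le_of_eq ?_)
  have htriR' : ∀ i j : Fin L, j < i → R' i j = 0 := by
    intro i j h
    rw [hR']
    exact hP'tri _ _ (Fin.succ_lt_succ_iff.mpr h)
  have hne : ∀ k j : ℕ, k < j → j < L → A' k k ≠ A' j j := by
    intro k j hkj hjL
    have hk : k < L := lt_trans hkj hjL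
    have e1 : A' k k = P' (⟨k, hk⟩ : Fin L).succ (⟨k, hk⟩ : Fin L).succ := by
      rw [hA' ⟨k, hk⟩ ⟨k, hk⟩, hR']
    have e2 : A' j j = P' (⟨j, hjL⟩ : Fin L).succ (⟨j, hjL⟩ : Fin L).succ := by
      rw [hA' ⟨j, hjL⟩ ⟨j, hjL⟩, hR']
    rw [e1, e2]
    exact hdistinct _ _ (by simp [Fin.ext_iff]; omega)
  have hpf := pow_formula R' A' hA' htriR' hne t ht
  calc ((fun i : Fin L => e i.succ) ᵥ* R' ^ t) ⬝ᵥ p0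
      = ∑ j : Fin L, (∑ i : Fin L, e i.succ * (R' ^ t) i j) * p0 j := rfl
    _ = ∑ j : Fin L, ∑ i : Fin L, e i.succ * (R' ^ t) i j * p0 j := by
        exact Finset.sum_congr rfl fun j _ => Finset.sum_mul _ _ _
    _ = ∑ i : Fin L, ∑ j : Fin L, e i.succ * (R' ^ t) i j * p0 j :=
        Finset.sum_comm
    _ = ∑ i : Fin L, ∑ j ∈ Finset.Ici i, e i.succ * (R' ^ t) i j * p0 j := by
        refine Finset.sum_congr rfl fun i _ => ?_
        symm
        apply Finset.sum_subset (Finset.subset_univ _)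
        intro j _ hj
        rw [tri_pow R' htriR' t i j (by simpa using hj), mul_zero, zero_mul]
    _ = ∑ i : Fin L, ∑ j ∈ Finset.Ici i, ∑ k ∈ Finset.Icc i j,
          e i.succ * powerFactor A' (i : ℕ) (j : ℕ) (k : ℕ) * p0 j
            * (R' k k) ^ (t - 1) := by
        refine Finset.sum_congr rfl fun i _ => ?_
        refine Finset.sum_congr rfl fun j hj => ?_
        rw [Finset.mem_Ici] at hj
        rw [hpf i j hj, Finset.mul_sum, Finset.sum_mul]
        refine Finset.sum_congr rfl fun k _ => ?_
        rw [hA' k k]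
        ring
    _ = ∑ k : Fin L, ∑ i ∈ Finset.Iic k, ∑ j ∈ Finset.Ici k,
          e i.succ * powerFactor A' (i : ℕ) (j : ℕ) (k : ℕ) * p0 j
            * (R' k k) ^ (t - 1) :=
        triple_reorder _
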